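/- Let X be a normed space over ℝ or ℂ, (αₙ) a strictly increasing sequence of non-negative reals, f : [T,∞) → X, and N ∈ ℕ. If fₙ, gₙ (n = 1,…,N) are X-valued S-polynomials such that both ‖f(t) − Σ fₙ(t) e^{−αₙt}‖ and ‖f(t) − Σ gₙ(t) e^{−αₙt}‖ are O(e^{−(α_N+ε)t}) for some ε > 0, then fₙ = gₙ for all n = 1,…,N. -/

import Mathlib

open Filter Asymptotics

section Aux
open Complex


lemma cesaro {h : ℝ → ℂ} (hc : Continuous h) (h0 : Tendsto h atTop (nhds 0)) :
    Tendsto (fun T : ℝ => (∫ t in (0:ℝ)..T, h t) / T) atTop (nhds 0) := by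
  rw [NormedAddCommGroup.tendsto_nhds_zero] at h0 ⊢
  intro ε hε
  obtain ⟨T₁, hT₁⟩ := (eventually_atTop).mp (h0 (ε/2) (by positivity))
  set T₀ : ℝ := max T₁ 0 with hT₀def
  set C : ℝ := ‖∫ t in (0:ℝ)..T₀, h t‖ with hCdef
  have hC0 : 0 ≤ C := norm_nonneg _
  filter_upwards [eventually_ge_atTop (max T₀ ((C+1)*(2/ε))), eventually_gt_atTop (0:ℝ)]
    with T hT hTpos
  have hTT₀ : T₀ ≤ T := le_trans (le_max_left _ _) hT
  have hT₀nn : (0:ℝ) ≤ T₀ := le_max_right _ _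
  have hsplit : (∫ t in (0:ℝ)..T, h t) = (∫ t in (0:ℝ)..T₀, h t) + ∫ t in T₀..T, h t :=
    (intervalIntegral.integral_add_adjacent_intervals (hc.intervalIntegrable _ _)
      (hc.intervalIntegrable _ _)).symm
  have htail : ‖∫ t in T₀..T, h t‖ ≤ ε/2 * |T - T₀| := by
    apply intervalIntegral.norm_integral_le_of_norm_le_const
    intro x hx
    rw [Set.uIoc_of_le hTT₀] at hx
    exact (hT₁ x (le_trans (le_max_left _ _) hx.1.le)).le
  have hbound : ‖∫ t in (0:ℝ)..T, h t‖ ≤ C + ε/2 * T := by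
    rw [hsplit]
    refine le_trans (norm_add_le _ _) ?_
    have habs : |T - T₀| ≤ T := by
      rw [_root_.abs_of_nonneg (by linarith)]; linarith
    nlinarith
  have h2 : (C+1)*(2/ε) ≤ T := le_trans (le_max_right _ _) hT
  have : ‖(∫ t in (0:ℝ)..T, h t) / (T:ℂ)‖ = ‖∫ t in (0:ℝ)..T, h t‖ / T := by
    rw [norm_div, Complex.norm_real, Real.norm_of_nonneg hTpos.le]
  rw [this, div_lt_iff₀ hTpos]
  have : C < ε/2 * T := by
    have : ε/2 * ((C+1)*(2/ε)) ≤ ε/2 * T := by nlinarith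
    have heq : ε/2 * ((C+1)*(2/ε)) = C + 1 := by field_simp
    linarith
  linarith

lemma trig_coeffs_vanish (S : Finset ℝ) (a : ℝ → ℂ)
    (h : Tendsto (fun t : ℝ => ∑ μ ∈ S, a μ * Complex.exp (μ * t * I)) atTop (nhds 0)) :
    ∀ μ₀ ∈ S, a μ₀ = 0 := by
  intro μ₀ hμ₀
  set F : ℝ → ℂ := fun t => (∑ μ ∈ S, a μ * Complex.exp (μ * t * I)) * Complex.exp (-μ₀ * t * I)
    with hFdef
  have hFeq : ∀ t : ℝ, F t = ∑ μ ∈ S, a μ * Complex.exp (((μ - μ₀ : ℝ) : ℂ) * I * t) := by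
    intro t
    show (∑ μ ∈ S, a μ * Complex.exp (μ * t * I)) * Complex.exp (-μ₀ * t * I) = _
    rw [Finset.sum_mul]
    refine Finset.sum_congr rfl fun μ _ => ?_
    rw [mul_assoc, ← Complex.exp_add]
    push_cast
    ring_nf
  have hFcont : Continuous F := by
    apply Continuous.mul
    · exact continuous_finset_sum _ fun μ _ => continuous_const.mul
        (Complex.continuous_exp.comp (by continuity))
    · exact Complex.continuous_exp.comp (by continuity)
  have hF0 : Tendsto F atTop (nhds 0) := by
    have hb : ∀ t, ‖F t‖ ≤ ‖∑ μ ∈ S, a μ * Complex.exp (μ * t * I)‖ := by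
      intro t
      show ‖(∑ μ ∈ S, a μ * Complex.exp (μ * t * I)) * Complex.exp (-μ₀ * t * I)‖ ≤ _
      rw [norm_mul]
      have : ‖Complex.exp (-μ₀ * t * I)‖ = 1 := by
        rw [show (-μ₀ : ℂ) * t * I = ((-μ₀ * t : ℝ) : ℂ) * I by push_cast; ring]
        exact Complex.norm_exp_ofReal_mul_I _
      rw [this, mul_one]
    exact squeeze_zero_norm hb (by simpa using h.norm)
  have hA : Tendsto (fun T : ℝ => (∫ t in (0:ℝ)..T, F t) / T) atTop (nhds 0) :=
    cesaro hFcont hF0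
  have hB : Tendsto (fun T : ℝ => (∫ t in (0:ℝ)..T, F t) / T) atTop (nhds (a μ₀)) := by
    have hint : ∀ T : ℝ, (∫ t in (0:ℝ)..T, F t) / T
        = ∑ μ ∈ S, a μ * (∫ t in (0:ℝ)..T, Complex.exp ((((μ - μ₀ : ℝ) : ℂ) * I) * t)) / T := by
      intro T
      rw [intervalIntegral.integral_congr (fun t _ => hFeq t)]
      rw [intervalIntegral.integral_finset_sum]
      · rw [Finset.sum_div]
        refine Finset.sum_congr rfl fun μ _ => ?_
        rw [intervalIntegral.integral_const_mul]
      · intro μ _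
        apply Continuous.intervalIntegrable
        exact continuous_const.mul (Complex.continuous_exp.comp (by continuity))
    simp only [hint]
    have hsum : a μ₀ = ∑ μ ∈ S, (if μ = μ₀ then a μ₀ else 0) := by
      rw [Finset.sum_ite_eq' S μ₀ (fun _ => a μ₀), if_pos hμ₀]
    rw [hsum]
    apply tendsto_finset_sum
    intro μ hμ
    by_cases hcase : μ = μ₀
    · subst hcase
      rw [if_pos rfl]
      apply Tendsto.congr' (f₁ := fun _ => a μ)
      · filter_upwards [eventually_gt_atTop (0:ℝ)] with T hT
        have h0 : ((μ - μ : ℝ) : ℂ) * I = 0 := by push_cast; ring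
        rw [h0]
        simp only [zero_mul, Complex.exp_zero]
        rw [intervalIntegral.integral_const, sub_zero, Complex.real_smul, mul_one]
        rw [mul_div_assoc, div_self (by exact_mod_cast hT.ne'), mul_one]
      · exact tendsto_const_nhds
    · rw [if_neg hcase]
      set c : ℂ := ((μ - μ₀ : ℝ) : ℂ) * I with hcdef
      have hc : c ≠ 0 := by
        simp [hcdef, Complex.ext_iff, sub_eq_zero, hcase]
      have hb : ∀ᶠ T : ℝ in atTop,
          ‖a μ * (∫ t in (0:ℝ)..T, Complex.exp ((((μ - μ₀ : ℝ) : ℂ) * I) * t)) / (T:ℂ)‖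
            ≤ ‖a μ‖ * (2 / ‖c‖) / T := by
        filter_upwards [eventually_gt_atTop (0:ℝ)] with T hT
        rw [integral_exp_mul_complex hc, Complex.ofReal_zero]
        have h2 : ‖Complex.exp (c * T) - Complex.exp (c * 0)‖ ≤ 2 := by
          have habs : ‖Complex.exp (c * T)‖ = 1 := by
            rw [show c * T = (((μ - μ₀) * T : ℝ) : ℂ) * I by rw [hcdef]; push_cast; ring]
            exact Complex.norm_exp_ofReal_mul_I _
          calc ‖Complex.exp (c * T) - Complex.exp (c * 0)‖
              ≤ ‖Complex.exp (c * T)‖ + ‖Complex.exp (c * 0)‖ := norm_sub_le _ _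
            _ ≤ 2 := by rw [habs, mul_zero, Complex.exp_zero]; norm_num
        have heq : ‖a μ * ((Complex.exp (c * T) - Complex.exp (c * 0)) / c) / (T:ℂ)‖
            = ‖a μ‖ * (‖Complex.exp (c * T) - Complex.exp (c * 0)‖ / ‖c‖) / T := by
          rw [norm_div, norm_mul, norm_div, Complex.norm_real, Real.norm_of_nonneg hT.le]
        rw [heq]
        gcongr
      exact squeeze_zero_norm' hb (Tendsto.div_atTop tendsto_const_nhds tendsto_id)
  exact tendsto_nhds_unique hB hA

lemma poly_div_pow (p : Polynomial ℂ) (M : ℕ) (hdeg : p.natDegree ≤ M) :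
    Tendsto (fun t : ℝ => p.eval (t:ℂ) / (t:ℂ)^M) atTop (nhds (p.coeff M)) := by
  have heval : ∀ t : ℝ, p.eval (t:ℂ) / (t:ℂ)^M
      = ∑ i ∈ Finset.range (M+1), p.coeff i * (t:ℂ)^i / (t:ℂ)^M := by
    intro t
    rw [Polynomial.eval_eq_sum_range' (lt_of_le_of_lt hdeg (Nat.lt_succ_self M)),
      Finset.sum_div]
  simp only [heval]
  have htarget : p.coeff M = ∑ i ∈ Finset.range (M+1), (if i = M then p.coeff M else 0) := by
    rw [Finset.sum_ite_eq' (Finset.range (M+1)) M (fun _ => p.coeff M),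
      if_pos (Finset.self_mem_range_succ M)]
  rw [htarget]
  apply tendsto_finset_sum
  intro i hi
  have hiM : i ≤ M := Nat.lt_succ_iff.mp (Finset.mem_range.mp hi)
  by_cases hcase : i = M
  · subst hcase
    rw [if_pos rfl]
    apply Tendsto.congr' (f₁ := fun _ => p.coeff i)
    · filter_upwards [eventually_ge_atTop (1:ℝ)] with t ht
      have : (t:ℂ)^i ≠ 0 := pow_ne_zero _ (by exact_mod_cast (by linarith : t ≠ 0))
      rw [mul_div_assoc, div_self this, mul_one]
    · exact tendsto_const_nhds
  · rw [if_neg hcase]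
    have hlt : i < M := lt_of_le_of_ne hiM hcase
    refine squeeze_zero_norm' (a := fun t : ℝ => ‖p.coeff i‖ / t) ?_
      (Tendsto.div_atTop tendsto_const_nhds tendsto_id)
    filter_upwards [eventually_ge_atTop (1:ℝ)] with t ht
    have ht0 : (0:ℝ) < t := by linarith
    rw [norm_div, norm_mul, norm_pow, norm_pow, Complex.norm_real,
      Real.norm_of_nonneg ht0.le]
    rw [div_le_div_iff₀ (by positivity) ht0]
    calc ‖p.coeff i‖ * t^i * t = ‖p.coeff i‖ * t^(i+1) := by ring
      _ ≤ ‖p.coeff i‖ * t^M :=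
          mul_le_mul_of_nonneg_left (pow_le_pow_right₀ ht (by omega)) (norm_nonneg _)

lemma topcoeff (M : ℕ) (P : ℝ →₀ Polynomial ℂ) (hdeg : ∀ μ, (P μ).natDegree ≤ M)
    (h : Tendsto (fun t : ℝ => ∑ μ ∈ P.support, (P μ).eval (t:ℂ) * Complex.exp (μ * t * I))
      atTop (nhds 0)) :
    ∀ μ ∈ P.support, (P μ).coeff M = 0 := by
  apply trig_coeffs_vanish
  have hkey : (fun t : ℝ => ∑ μ ∈ P.support, (P μ).coeff M * Complex.exp (μ * t * I))
      = fun t : ℝ =>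
        (∑ μ ∈ P.support, (P μ).eval (t:ℂ) * Complex.exp (μ * t * I)) / (t:ℂ)^M
        - ∑ μ ∈ P.support,
            ((P μ).eval (t:ℂ) / (t:ℂ)^M - (P μ).coeff M) * Complex.exp (μ * t * I) := by
    funext t
    rw [Finset.sum_div, ← Finset.sum_sub_distrib]
    refine Finset.sum_congr rfl fun μ _ => ?_
    ring
  rw [hkey]
  have h1 : Tendsto (fun t : ℝ =>
      (∑ μ ∈ P.support, (P μ).eval (t:ℂ) * Complex.exp (μ * t * I)) / (t:ℂ)^M)
      atTop (nhds 0) := by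
    refine squeeze_zero_norm'
      (a := fun t : ℝ => ‖∑ μ ∈ P.support, (P μ).eval (t:ℂ) * Complex.exp (μ * t * I)‖) ?_
      (by simpa using h.norm)
    filter_upwards [eventually_ge_atTop (1:ℝ)] with t ht
    rw [norm_div]
    apply div_le_of_le_mul₀ ?_ (norm_nonneg _) ?_
    · exact norm_nonneg _
    · nlinarith [norm_nonneg (∑ μ ∈ P.support, (P μ).eval (t:ℂ) * Complex.exp (μ * t * I)),
        one_le_pow₀ (by rw [Complex.norm_real, Real.norm_of_nonneg (by linarith)]; exact ht : (1:ℝ) ≤ ‖(t:ℂ)‖) (n := M),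
        norm_pow (t:ℂ) M]
  have h2 : Tendsto (fun t : ℝ => ∑ μ ∈ P.support,
      ((P μ).eval (t:ℂ) / (t:ℂ)^M - (P μ).coeff M) * Complex.exp (μ * t * I))
      atTop (nhds 0) := by
    have : (0:ℂ) = ∑ μ ∈ P.support, (0:ℂ) := by simp
    rw [this]
    apply tendsto_finset_sum
    intro μ _
    have hq : Tendsto (fun t : ℝ => (P μ).eval (t:ℂ) / (t:ℂ)^M - (P μ).coeff M)
        atTop (nhds 0) := by
      simpa using (poly_div_pow (P μ) M (hdeg μ)).sub_const ((P μ).coeff M)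
    refine squeeze_zero_norm
      (a := fun t : ℝ => ‖(P μ).eval (t:ℂ) / (t:ℂ)^M - (P μ).coeff M‖) ?_
      (by simpa using hq.norm)
    intro t
    rw [norm_mul, show ‖Complex.exp ((μ:ℂ) * t * I)‖ = 1 by
      rw [show (μ:ℂ) * t * I = ((μ * t : ℝ):ℂ) * I by push_cast; ring]
      exact Complex.norm_exp_ofReal_mul_I _, mul_one]
  simpa using h1.sub h2

lemma expSum_eq_zero : ∀ (M : ℕ) (P : ℝ →₀ Polynomial ℂ), (∀ μ, (P μ).natDegree ≤ M) →
    Tendsto (fun t : ℝ => ∑ μ ∈ P.support, (P μ).eval (t:ℂ) * Complex.exp (μ * t * I))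
      atTop (nhds 0) →
    ∀ t : ℝ, ∑ μ ∈ P.support, (P μ).eval (t:ℂ) * Complex.exp (μ * t * I) = 0 := by
  intro M
  induction M with
  | zero =>
    intro P hdeg h t
    apply Finset.sum_eq_zero
    intro μ hμ
    have hc := topcoeff 0 P hdeg h μ hμ
    have : P μ = 0 := by
      rw [Polynomial.eq_C_of_natDegree_le_zero (hdeg μ), hc]
      simp
    rw [this]
    simp
  | succ M ih =>
    intro P hdeg h
    have hc := topcoeff (M+1) P hdeg h
    have hdeg' : ∀ μ, (P μ).natDegree ≤ M := by
      intro μ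
      by_cases hμ : μ ∈ P.support
      · rw [Polynomial.natDegree_le_iff_coeff_eq_zero]
        intro m hm
        rcases eq_or_lt_of_le (Nat.succ_le_of_lt hm) with heq | hlt
        · rw [← heq]; exact hc μ hμ
        · exact (Polynomial.natDegree_le_iff_coeff_eq_zero.mp (hdeg μ)) m hlt
      · simp [Finsupp.notMem_support_iff.mp hμ]
    exact ih P hdeg' h

def ExpPoly (f : ℝ → ℂ) : Prop :=
  ∃ P : ℝ →₀ Polynomial ℂ,
    ∀ t : ℝ, f t = ∑ μ ∈ P.support, (P μ).eval (t:ℂ) * Complex.exp (μ * t * I)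

lemma expSum_superset (P : ℝ →₀ Polynomial ℂ) (U : Finset ℝ) (hU : P.support ⊆ U) (t : ℝ) :
    ∑ μ ∈ U, (P μ).eval (t:ℂ) * Complex.exp (μ * t * I)
      = ∑ μ ∈ P.support, (P μ).eval (t:ℂ) * Complex.exp (μ * t * I) := by
  symm
  apply Finset.sum_subset hU
  intro μ _ hμ
  rw [Finsupp.notMem_support_iff.mp hμ]
  simp

lemma ExpPoly.congr {f g : ℝ → ℂ} (hf : ExpPoly f) (h : ∀ t, f t = g t) : ExpPoly g := by
  obtain ⟨P, hP⟩ := hf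
  exact ⟨P, fun t => (h t) ▸ hP t⟩

lemma ExpPoly.add {f g : ℝ → ℂ} (hf : ExpPoly f) (hg : ExpPoly g) :
    ExpPoly (fun t => f t + g t) := by
  obtain ⟨P, hP⟩ := hf
  obtain ⟨Q, hQ⟩ := hg
  refine ⟨P + Q, fun t => ?_⟩
  have hsub : (P + Q).support ⊆ P.support ∪ Q.support := Finsupp.support_add
  show f t + g t = _
  rw [← expSum_superset (P + Q) _ hsub, hP t, hQ t,
    ← expSum_superset P (P.support ∪ Q.support) Finset.subset_union_left,
    ← expSum_superset Q (P.support ∪ Q.support) Finset.subset_union_right,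
    ← Finset.sum_add_distrib]
  refine Finset.sum_congr rfl fun μ _ => ?_
  rw [Finsupp.add_apply, Polynomial.eval_add]
  ring

lemma expPoly_zero : ExpPoly (fun _ => 0) := ⟨0, by simp⟩

lemma expPoly_single (μ : ℝ) (p : Polynomial ℂ) :
    ExpPoly (fun t => p.eval (t:ℂ) * Complex.exp (μ * t * I)) := by
  refine ⟨Finsupp.single μ p, fun t => ?_⟩
  by_cases hp : p = 0
  · subst hp; simp
  · rw [Finsupp.support_single_ne_zero _ hp, Finset.sum_singleton, Finsupp.single_eq_same]

lemma expPoly_sum {ι : Type*} (s : Finset ι) (f : ι → ℝ → ℂ) (hf : ∀ j ∈ s, ExpPoly (f j)) :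
    ExpPoly (fun t => ∑ j ∈ s, f j t) := by
  classical
  induction s using Finset.induction_on with
  | empty => exact expPoly_zero.congr (by simp)
  | @insert j s' hj ih =>
    have h1 := hf j (Finset.mem_insert_self _ _)
    have h2 := ih (fun k hk => hf k (Finset.mem_insert_of_mem hk))
    exact (h1.add h2).congr (by intro t; rw [Finset.sum_insert hj])

lemma expPoly_term (a : ℂ) (m : ℕ) (ω : ℝ) (c : Bool) :
    ExpPoly (fun t : ℝ =>
      ((t:ℂ)^m * (if c then Complex.cos (ω*t) else Complex.sin (ω*t))) * a) := by
  cases c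
  · -- sin
    simp only [Bool.false_eq_true, if_false]
    have h1 := expPoly_single (-ω) (Polynomial.C (a * I / 2) * Polynomial.X ^ m)
    have h2 := expPoly_single ω (Polynomial.C (-(a * I) / 2) * Polynomial.X ^ m)
    refine (h1.add h2).congr fun t => ?_
    simp only [Polynomial.eval_mul, Polynomial.eval_C, Polynomial.eval_pow, Polynomial.eval_X]
    rw [Complex.sin]
    rw [show ((-ω : ℝ):ℂ) * t * I = -(↑ω * ↑t) * I by push_cast; ring]
    ring
  · -- cos
    simp only [if_true]
    have h1 := expPoly_single ω (Polynomial.C (a / 2) * Polynomial.X ^ m)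
    have h2 := expPoly_single (-ω) (Polynomial.C (a / 2) * Polynomial.X ^ m)
    refine (h1.add h2).congr fun t => ?_
    simp only [Polynomial.eval_mul, Polynomial.eval_C, Polynomial.eval_pow, Polynomial.eval_X]
    rw [Complex.cos]
    rw [show ((-ω : ℝ):ℂ) * t * I = -(↑ω * ↑t) * I by push_cast; ring]
    ring

lemma ExpPoly.eq_zero {f : ℝ → ℂ} (hf : ExpPoly f) (h : Tendsto f atTop (nhds 0)) :
    ∀ t, f t = 0 := by
  obtain ⟨P, hP⟩ := hf
  intro t
  rw [hP t]
  refine expSum_eq_zero (P.support.sup fun μ => (P μ).natDegree) P ?_ ?_ t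
  · intro μ
    by_cases hμ : μ ∈ P.support
    · exact Finset.le_sup (f := fun μ => (P μ).natDegree) hμ
    · rw [Finsupp.notMem_support_iff.mp hμ]; simp
  · exact h.congr (fun t => hP t)

/-- An `X`-valued S-polynomial: a finite sum of functions
`t ↦ t^m cos(ωt) Z` and `t ↦ t^m sin(ωt) Z`. -/
def IsSPoly {X : Type*} [AddCommGroup X] [Module ℝ X] (f : ℝ → X) : Prop :=
  ∃ (N : ℕ) (m : Fin N → ℕ) (ω : Fin N → ℝ) (c : Fin N → Bool) (Z : Fin N → X),
    ∀ t : ℝ, f t = ∑ j : Fin N,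
      (t ^ m j * (if c j then Real.cos (ω j * t) else Real.sin (ω j * t))) • Z j

lemma IsSPoly.sub {X : Type*} [AddCommGroup X] [Module ℝ X] {f g : ℝ → X}
    (hf : IsSPoly f) (hg : IsSPoly g) : IsSPoly (fun t => f t - g t) := by
  obtain ⟨N₁, m₁, ω₁, c₁, Z₁, h₁⟩ := hf
  obtain ⟨N₂, m₂, ω₂, c₂, Z₂, h₂⟩ := hg
  refine ⟨N₁ + N₂, Fin.append m₁ m₂, Fin.append ω₁ ω₂, Fin.append c₁ c₂,
    Fin.append Z₁ (fun j => -Z₂ j), fun t => ?_⟩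
  rw [Fin.sum_univ_add]
  simp only [Fin.append_left, Fin.append_right, smul_neg]
  rw [h₁ t, h₂ t, Finset.sum_neg_distrib, ← sub_eq_add_neg]

lemma IsSPoly.tendsto_exp_smul {X : Type*} [NormedAddCommGroup X] [NormedSpace ℝ X]
    {p : ℝ → X} (hp : IsSPoly p) {c : ℝ} (hc : 0 < c) :
    Tendsto (fun t : ℝ => Real.exp (-c * t) • p t) atTop (nhds 0) := by
  obtain ⟨K, m, ω, b, Z, hrep⟩ := hp
  have heq : ∀ t : ℝ, Real.exp (-c * t) • p t
      = ∑ j : Fin K, (Real.exp (-c * t) *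
          (t ^ m j * (if b j then Real.cos (ω j * t) else Real.sin (ω j * t)))) • Z j := by
    intro t
    rw [hrep t, Finset.smul_sum]
    exact Finset.sum_congr rfl fun j _ => (smul_smul _ _ _)
  simp only [heq]
  have : (0 : X) = ∑ _j : Fin K, (0 : X) := by simp
  rw [this]
  apply tendsto_finset_sum
  intro j _
  have hscal : Tendsto (fun t : ℝ => Real.exp (-c * t) *
      (t ^ m j * (if b j then Real.cos (ω j * t) else Real.sin (ω j * t))))
      atTop (nhds 0) := by
    refine squeeze_zero_norm' (a := fun t : ℝ => t ^ ((m j : ℕ) : ℝ) * Real.exp (-c * t)) ?_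
      (tendsto_rpow_mul_exp_neg_mul_atTop_nhds_zero _ c hc)
    filter_upwards [eventually_ge_atTop (1:ℝ)] with t ht
    have ht0 : (0:ℝ) < t := by linarith
    have htrig : |(if b j then Real.cos (ω j * t) else Real.sin (ω j * t))| ≤ 1 := by
      split
      · exact Real.abs_cos_le_one _
      · exact Real.abs_sin_le_one _
    rw [Real.norm_eq_abs, abs_mul, abs_mul, Real.abs_exp, _root_.abs_pow, _root_.abs_of_nonneg ht0.le,
      Real.rpow_natCast]
    have h1 : Real.exp (-c * t) * (t ^ m j * |if b j then Real.cos (ω j * t)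
        else Real.sin (ω j * t)|) ≤ Real.exp (-c * t) * (t ^ m j * 1) := by
      gcongr
    calc Real.exp (-c * t) * (t ^ m j * |if b j then Real.cos (ω j * t)
          else Real.sin (ω j * t)|) ≤ Real.exp (-c * t) * (t ^ m j * 1) := h1
      _ = t ^ m j * Real.exp (-c * t) := by ring
  simpa using hscal.smul_const (Z j)

lemma IsSPoly.eq_zero {X : Type*} [NormedAddCommGroup X] [NormedSpace ℝ X]
    {p : ℝ → X} (hp : IsSPoly p) (h : Tendsto p atTop (nhds 0)) : ∀ t, p t = 0 := by
  obtain ⟨K, m, ω, b, Z, hrep⟩ := hp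
  intro t
  apply NormedSpace.eq_zero_of_forall_dual_eq_zero ℝ
  intro φ
  -- the complexified scalar function
  set F : ℝ → ℂ := fun s => ∑ j : Fin K,
    (((s:ℂ)) ^ m j * (if b j then Complex.cos (ω j * s) else Complex.sin (ω j * s)))
      * ((φ (Z j) : ℝ) : ℂ) with hFdef
  have hcast : ∀ s : ℝ, ((φ (p s) : ℝ) : ℂ) = F s := by
    intro s
    rw [hrep s, map_sum, hFdef]
    push_cast
    refine Finset.sum_congr rfl fun j _ => ?_
    rw [map_smul, smul_eq_mul]
    push_cast
    rw [apply_ite (Complex.ofReal)]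
    push_cast
    ring
  have hF : ExpPoly F := expPoly_sum Finset.univ _ (fun j _ => expPoly_term _ _ _ _)
  have hF0 : Tendsto F atTop (nhds 0) := by
    have h1 : Tendsto (fun s => φ (p s)) atTop (nhds 0) := by
      simpa [Function.comp_def] using (φ.continuous.tendsto 0).comp h
    have h2 : Tendsto (fun s => ((φ (p s) : ℝ) : ℂ)) atTop (nhds 0) := by
      simpa [Function.comp_def] using (Complex.continuous_ofReal.tendsto 0).comp h1
    exact h2.congr hcast
  have := hF.eq_zero hF0 t
  rw [← hcast t] at this
  exact_mod_cast this

end Aux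


/-- Uniqueness of the S-polynomial coefficients in an asymptotic expansion. -/
theorem expansion_coefficients_unique
    {X : Type*} [NormedAddCommGroup X] [NormedSpace ℝ X]
    (α : ℕ → ℝ) (hmono : StrictMono α) (hnonneg : ∀ n, 0 ≤ α n)
    (f : ℝ → X) (N : ℕ) (fn gn : ℕ → ℝ → X)
    (hfn : ∀ n ∈ Finset.Icc 1 N, IsSPoly (fn n))
    (hgn : ∀ n ∈ Finset.Icc 1 N, IsSPoly (gn n))
    (hf : ∃ ε > 0,
      (fun t : ℝ => f t - ∑ n ∈ Finset.Icc 1 N, Real.exp (-(α n) * t) • fn n t)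
        =O[atTop] fun t : ℝ => Real.exp (-(α N + ε) * t))
    (hg : ∃ ε > 0,
      (fun t : ℝ => f t - ∑ n ∈ Finset.Icc 1 N, Real.exp (-(α n) * t) • gn n t)
        =O[atTop] fun t : ℝ => Real.exp (-(α N + ε) * t)) :
    ∀ n ∈ Finset.Icc 1 N, fn n = gn n := by
  obtain ⟨ε₁, hε₁, h₁⟩ := hf
  obtain ⟨ε₂, hε₂, h₂⟩ := hg
  set ε : ℝ := min ε₁ ε₂ with hεdef
  have hε : 0 < ε := lt_min hε₁ hε₂
  have htrans : ∀ ε' : ℝ, ε ≤ ε' →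
      (fun t : ℝ => Real.exp (-(α N + ε') * t)) =O[atTop]
        fun t : ℝ => Real.exp (-(α N + ε) * t) := by
    intro ε' hε'
    rw [isBigO_iff]
    refine ⟨1, ?_⟩
    filter_upwards [eventually_ge_atTop (0:ℝ)] with t ht
    rw [one_mul, Real.norm_eq_abs, Real.norm_eq_abs, Real.abs_exp, Real.abs_exp]
    exact Real.exp_le_exp.mpr (by nlinarith)
  have hD : (fun t : ℝ => ∑ n ∈ Finset.Icc 1 N, Real.exp (-(α n) * t) • (fn n t - gn n t))
      =O[atTop] fun t : ℝ => Real.exp (-(α N + ε) * t) := by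
    have := (h₂.trans (htrans ε₂ (min_le_right _ _))).sub
      (h₁.trans (htrans ε₁ (min_le_left _ _)))
    refine this.congr_left fun t => ?_
    simp only [smul_sub, Finset.sum_sub_distrib]
    abel
  intro n
  induction n using Nat.strong_induction_on with
  | _ n ih =>
  intro hn
  obtain ⟨hn1, hnN⟩ := Finset.mem_Icc.mp hn
  -- set up E
  set E : ℝ → X := fun t => Real.exp (α n * t) •
    (∑ k ∈ Finset.Icc 1 N, Real.exp (-(α k) * t) • (fn k t - gn k t)) with hEdef
  have hE_eq : ∀ t : ℝ, E t
      = ∑ k ∈ Finset.Icc 1 N, Real.exp ((α n - α k) * t) • (fn k t - gn k t) := by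
    intro t
    show Real.exp (α n * t) •
      (∑ k ∈ Finset.Icc 1 N, Real.exp (-(α k) * t) • (fn k t - gn k t)) = _
    rw [Finset.smul_sum]
    refine Finset.sum_congr rfl fun k _ => ?_
    rw [smul_smul, ← Real.exp_add]
    ring_nf
  have hE_eq2 : ∀ t : ℝ, E t = (fn n t - gn n t)
      + ∑ k ∈ Finset.Icc (n+1) N, Real.exp ((α n - α k) * t) • (fn k t - gn k t) := by
    intro t
    rw [hE_eq t]
    have hstep1 : ∑ k ∈ Finset.Icc 1 N, Real.exp ((α n - α k) * t) • (fn k t - gn k t)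
        = ∑ k ∈ Finset.Icc n N, Real.exp ((α n - α k) * t) • (fn k t - gn k t) := by
      symm
      apply Finset.sum_subset
      · intro k hk
        obtain ⟨hk1, hk2⟩ := Finset.mem_Icc.mp hk
        exact Finset.mem_Icc.mpr ⟨le_trans hn1 hk1, hk2⟩
      · intro k hkmem hknot
        obtain ⟨hk1, hk2⟩ := Finset.mem_Icc.mp hkmem
        have hkn : k < n := by
          by_contra hc
          exact hknot (Finset.mem_Icc.mpr ⟨not_lt.mp hc, hk2⟩)
        rw [ih k hkn hkmem]
        simp
    rw [hstep1]
    rw [← Finset.add_sum_erase _ _ (Finset.mem_Icc.mpr ⟨le_refl n, hnN⟩)]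
    congr 1
    · rw [sub_self, zero_mul, Real.exp_zero, one_smul]
    · rw [Finset.Icc_erase_left]
      rw [← Finset.Icc_add_one_left_eq_Ioc]
  have hE_O : E =O[atTop] fun t : ℝ => Real.exp ((α n - (α N + ε)) * t) := by
    have hbase := (isBigO_refl (fun t : ℝ => Real.exp (α n * t)) atTop).smul hD
    refine hbase.trans (Asymptotics.isBigO_of_le _ fun t => ?_)
    rw [smul_eq_mul, Real.norm_eq_abs, Real.norm_eq_abs, abs_mul, Real.abs_exp, Real.abs_exp,
      Real.abs_exp, ← Real.exp_add]
    apply le_of_eq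
    congr 1
    ring
  have hglim : Tendsto (fun t : ℝ => Real.exp ((α n - (α N + ε)) * t)) atTop (nhds 0) := by
    apply Real.tendsto_exp_atBot.comp
    have hc : α n - (α N + ε) < 0 := by
      have : α n ≤ α N := hmono.monotone hnN
      linarith
    exact (tendsto_const_mul_atBot_of_neg hc).mpr tendsto_id
  have hE_0 : Tendsto E atTop (nhds 0) := hE_O.trans_tendsto hglim
  have htail : Tendsto (fun t : ℝ => ∑ k ∈ Finset.Icc (n+1) N,
      Real.exp ((α n - α k) * t) • (fn k t - gn k t)) atTop (nhds 0) := by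
    have : (0 : X) = ∑ k ∈ Finset.Icc (n+1) N, (0 : X) := by simp
    rw [this]
    apply tendsto_finset_sum
    intro k hk
    obtain ⟨hk1, hk2⟩ := Finset.mem_Icc.mp hk
    have hkmem : k ∈ Finset.Icc 1 N := Finset.mem_Icc.mpr ⟨by omega, hk2⟩
    have hkpos : 0 < α k - α n := sub_pos.mpr (hmono (by omega))
    have hsp : IsSPoly (fun t => fn k t - gn k t) := (hfn k hkmem).sub (hgn k hkmem)
    have := hsp.tendsto_exp_smul hkpos
    refine this.congr fun t => ?_
    congr 1
    ring
  have hlim : Tendsto (fun t : ℝ => fn n t - gn n t) atTop (nhds 0) := by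
    have : (fun t : ℝ => fn n t - gn n t) = fun t : ℝ => E t
        - ∑ k ∈ Finset.Icc (n+1) N, Real.exp ((α n - α k) * t) • (fn k t - gn k t) := by
      funext t
      rw [hE_eq2 t]
      abel
    rw [this]
    simpa using hE_0.sub htail
  have hsp : IsSPoly (fun t => fn n t - gn n t) := (hfn n hn).sub (hgn n hn)
  funext t
  have := hsp.eq_zero hlim t
  exact sub_eq_zero.mp this
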